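/- For every d > 0 and all integers n ≥ m > 0, there exist a finite family P of m points and a finite family Q of n points in ℝ^{d+1} such that for every unit vector w ∈ ℝ^{d+1}, after projecting all points of P and Q along w, there exists a hyperplane strictly separating all n projected points of Q from at least ⌊m·d/(d+1)⌋ of the projected points of P; that is, there exist a nonzero vector v ∈ ℝ^{d+1} and c ∈ ℝ with ⟪π_w(Q j), v⟫ > c for all j and ⟪π_w(P i), v⟫ < c for at least ⌊m·d/(d+1)⌋ indices i. -/

import Mathlib

open scoped InnerProductSpace
open scoped Classical

/-- Projection of a point `p` along the vector `w`. -/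
noncomputable def proj {d : ℕ} (w p : EuclideanSpace ℝ (Fin d)) : EuclideanSpace ℝ (Fin d) :=
  p - (⟪p, w⟫_ℝ / ‖w‖ ^ 2) • w

lemma proj_inner {N : ℕ} (w x y : EuclideanSpace ℝ (Fin N)) (hw : ‖w‖ = 1) :
    ⟪proj w x, proj w y⟫_ℝ = ⟪x, y⟫_ℝ - ⟪x, w⟫_ℝ * ⟪y, w⟫_ℝ := by
  have hww : ⟪w, w⟫_ℝ = 1 := by
    rw [real_inner_self_eq_norm_sq, hw]; norm_num
  simp only [proj, hw, one_pow, div_one, inner_sub_left, inner_sub_right,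
    real_inner_smul_left, real_inner_smul_right, hww]
  rw [real_inner_comm w y]
  ring

lemma proj_zero {N : ℕ} (w : EuclideanSpace ℝ (Fin N)) : proj w 0 = 0 := by
  simp [proj]

lemma sq_inner_le {N : ℕ} (x y : EuclideanSpace ℝ (Fin N)) :
    ⟪x, y⟫_ℝ ^ 2 ≤ ⟪x, x⟫_ℝ * ⟪y, y⟫_ℝ := by
  have h := @inner_mul_inner_self_le ℝ _ _ _ _ x y
  simp only [RCLike.re_to_real, Real.norm_eq_abs] at h
  rw [← real_inner_comm y x] at h
  nlinarith [abs_nonneg ⟪x, y⟫_ℝ, sq_abs ⟪x, y⟫_ℝ]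

noncomputable def uu (d : ℕ) : EuclideanSpace ℝ (Fin (d+1)) := WithLp.toLp 2 (fun _ => 1)

noncomputable def bb (d : ℕ) (k : Fin (d+1)) : EuclideanSpace ℝ (Fin (d+1)) :=
  EuclideanSpace.single k 1 - ((d:ℝ)+1)⁻¹ • uu d

lemma inner_uu (d : ℕ) : ⟪uu d, uu d⟫_ℝ = (d:ℝ)+1 := by
  rw [uu, PiLp.inner_apply]
  simp [Finset.sum_const]

lemma inner_single_uu (d : ℕ) (k : Fin (d+1)) :
    ⟪(EuclideanSpace.single k 1 : EuclideanSpace ℝ (Fin (d+1))), uu d⟫_ℝ = 1 := by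
  simp [uu, PiLp.inner_apply, EuclideanSpace.single_apply]

lemma inner_single_w (d : ℕ) (k : Fin (d+1)) (w : EuclideanSpace ℝ (Fin (d+1))) :
    ⟪(EuclideanSpace.single k 1 : EuclideanSpace ℝ (Fin (d+1))), w⟫_ℝ = w k := by
  simp [PiLp.inner_apply, EuclideanSpace.single_apply]

lemma inner_single_single (d : ℕ) (k j : Fin (d+1)) :
    ⟪(EuclideanSpace.single k 1 : EuclideanSpace ℝ (Fin (d+1))), EuclideanSpace.single j 1⟫_ℝ
      = if k = j then 1 else 0 := by
  rw [inner_single_w]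
  simp [EuclideanSpace.single_apply, eq_comm]

lemma inner_bu (d : ℕ) (k : Fin (d+1)) : ⟪bb d k, uu d⟫_ℝ = 0 := by
  have h1 : ((d:ℝ)+1) ≠ 0 := by positivity
  simp only [bb, inner_sub_left, real_inner_smul_left, inner_single_uu, inner_uu]
  field_simp
  simp

lemma inner_ub (d : ℕ) (k : Fin (d+1)) : ⟪uu d, bb d k⟫_ℝ = 0 := by
  rw [real_inner_comm]; exact inner_bu d k

lemma inner_bb (d : ℕ) (k j : Fin (d+1)) :
    ⟪bb d k, bb d j⟫_ℝ = (if k = j then 1 else 0) - ((d:ℝ)+1)⁻¹ := by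
  have h1 : ((d:ℝ)+1) ≠ 0 := by positivity
  have h2 : ⟪uu d, bb d j⟫_ℝ = 0 := inner_ub d j
  simp only [bb, inner_sub_left, real_inner_smul_left] at h2 ⊢
  simp only [inner_sub_right, real_inner_smul_right, inner_single_single, inner_single_uu,
    inner_uu] at h2 ⊢
  field_simp at h2 ⊢
  linarith [h2]

lemma sum_s (d : ℕ) (w : EuclideanSpace ℝ (Fin (d+1))) :
    ∑ k, ⟪bb d k, w⟫_ℝ = 0 := by
  have h1 : ((d:ℝ)+1) ≠ 0 := by positivity
  have hu : ⟪uu d, w⟫_ℝ = ∑ k, w k := by simp [uu, PiLp.inner_apply]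
  simp only [bb, inner_sub_left, real_inner_smul_left, inner_single_w, hu]
  rw [Finset.sum_sub_distrib]
  simp only [Finset.sum_const, Finset.card_univ, Fintype.card_fin, nsmul_eq_mul]
  have : ∑ k : Fin (d+1), w k = ⟪uu d, w⟫_ℝ := by simp [uu, PiLp.inner_apply]
  push_cast
  field_simp
  simp

lemma count_ge (d m : ℕ) (hm : 0 < m) (j : Fin (d+1)) :
    m * d / (d+1) ≤ (Finset.univ.filter fun i : Fin m => ¬ (i.1 % (d+1) = j.1)).card := by
  have hn : 0 < d+1 := d.succ_pos
  set A := Finset.univ.filter (fun i : Fin m => i.1 % (d+1) = j.1) with hAdef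
  have hA : A.card ≤ (m+d)/(d+1) := by
    have : A.card ≤ (Finset.range ((m+d)/(d+1))).card := by
      apply Finset.card_le_card_of_injOn (fun i => i.1/(d+1))
      · intro i hi
        simp only [Finset.mem_coe, Finset.mem_range]
        calc i.1/(d+1) ≤ (m-1)/(d+1) := Nat.div_le_div_right (by omega)
          _ < (m-1)/(d+1) + 1 := Nat.lt_succ_self _
          _ ≤ (m+d)/(d+1) := by
              rw [← Nat.add_div_right (m-1) hn]
              apply Nat.div_le_div_right; omega
      · intro i1 h1 i2 h2 heq
        have heq' : i1.1/(d+1) = i2.1/(d+1) := by simpa using heq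
        have e1 : i1.1 % (d+1) = j.1 := by
          have := h1; simp only [hAdef, Finset.coe_filter, Set.mem_setOf_eq, Finset.mem_univ, true_and] at this; exact this
        have e2 : i2.1 % (d+1) = j.1 := by
          have := h2; simp only [hAdef, Finset.coe_filter, Set.mem_setOf_eq, Finset.mem_univ, true_and] at this; exact this
        apply Fin.ext
        calc i1.1 = (d+1)*(i1.1/(d+1)) + i1.1 % (d+1) := (Nat.div_add_mod _ _).symm
          _ = (d+1)*(i2.1/(d+1)) + i2.1 % (d+1) := by rw [heq', e1, e2]
          _ = i2.1 := Nat.div_add_mod _ _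
    simpa using this
  have hcard : A.card + (Finset.univ.filter fun i : Fin m => ¬ (i.1 % (d+1) = j.1)).card = m := by
    rw [Finset.card_filter_add_card_filter_not]
    simp
  have h1 : (m*d/(d+1) + (m+d)/(d+1)) ≤ (m*d + (m+d))/(d+1) := by
    rw [Nat.le_div_iff_mul_le hn, add_mul]
    exact Nat.add_le_add (Nat.div_mul_le_self _ _) (Nat.div_mul_le_self _ _)
  have h2 : (m*d + (m+d))/(d+1) = m := by
    have he : m*d + (m+d) = (d+1)*m + d := by ring
    rw [he, Nat.mul_add_div hn, Nat.div_eq_of_lt (by omega), add_zero]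
  omega

set_option maxHeartbeats 4000000 in
theorem projection_hard_instance (d : ℕ) (hd : 0 < d) (m n : ℕ) (hm : 0 < m) (hmn : m ≤ n) :
    ∃ P : Fin m → EuclideanSpace ℝ (Fin (d + 1)),
    ∃ Q : Fin n → EuclideanSpace ℝ (Fin (d + 1)),
      ∀ w : EuclideanSpace ℝ (Fin (d + 1)), ‖w‖ = 1 →
        ∃ v : EuclideanSpace ℝ (Fin (d + 1)), v ≠ 0 ∧ ∃ c : ℝ,
          (∀ j, c < ⟪proj w (Q j), v⟫_ℝ) ∧
          m * d / (d + 1) ≤ (Finset.univ.filter fun i => ⟪proj w (P i), v⟫_ℝ < c).card := by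
  set D : ℝ := (d:ℝ)+1 with hDdef
  have hD2 : (2:ℝ) ≤ D := by
    have : (1:ℝ) ≤ (d:ℝ) := by exact_mod_cast hd
    simp only [hDdef]; linarith
  have hDpos : (0:ℝ) < D := by linarith
  set R : ℝ := 5*D with hRdef
  set β : ℝ := D⁻¹ with hβdef
  have hβD : β * D = 1 := inv_mul_cancel₀ (ne_of_gt hDpos)
  have hβpos : 0 < β := by positivity
  set fm : Fin m → Fin (d+1) := fun i => ⟨i.1 % (d+1), Nat.mod_lt _ d.succ_pos⟩ with hfm
  refine ⟨fun i => bb d (fm i) - R • uu d, fun _ => 0, ?_⟩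
  intro w hw
  have hww : ⟪w, w⟫_ℝ = 1 := by rw [real_inner_self_eq_norm_sq, hw]; norm_num
  set t : ℝ := ⟪uu d, w⟫_ℝ with htdef
  set s : Fin (d+1) → ℝ := fun k => ⟪bb d k, w⟫_ℝ with hsdef
  set ρ : ℝ := D - t^2 with hρdef
  -- t² ≤ D
  have ht : t^2 ≤ D := by
    have := sq_inner_le (uu d) w
    rw [inner_uu, hww] at this
    simpa [hDdef] using this
  have hρ0 : 0 ≤ ρ := by simp only [hρdef]; linarith
  -- s k ^ 2 * D ≤ ρ
  have hs : ∀ k, s k ^ 2 * D ≤ ρ := by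
    intro k
    set w' : EuclideanSpace ℝ (Fin (d+1)) := w - (t/D) • uu d with hw'
    have h1 : ⟪bb d k, w'⟫_ℝ = s k := by
      simp only [hw', inner_sub_right, real_inner_smul_right, inner_bu, hsdef]
      ring
    have h2 : ⟪w', w'⟫_ℝ = 1 - t^2/D := by
      simp only [hw', inner_sub_left, inner_sub_right, real_inner_smul_left,
        real_inner_smul_right, hww, inner_uu, inner_ub]
      rw [real_inner_comm (uu d) w, ← htdef, ← hDdef]
      field_simp
      ring
    have h3 := sq_inner_le (bb d k) w'
    rw [h1, h2, inner_bb] at h3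
    simp only [if_pos rfl] at h3
    have hb1 : (1 - D⁻¹ : ℝ) ≤ 1 := by
      have : 0 < D⁻¹ := by positivity
      linarith
    have h4 : s k ^2 ≤ 1 * (1 - t^2/D) := by
      have hnn : (0:ℝ) ≤ 1 - t^2/D := by
        rw [sub_nonneg, div_le_one hDpos]; exact ht
      calc s k ^2 ≤ (1 - D⁻¹) * (1 - t^2/D) := by rw [← hDdef] at h3; exact h3
        _ ≤ 1 * (1 - t^2/D) := mul_le_mul_of_nonneg_right hb1 hnn
    rw [one_mul] at h4
    have := mul_le_mul_of_nonneg_right h4 (le_of_lt hDpos)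
    calc s k ^2 * D ≤ (1 - t^2/D) * D := this
      _ = ρ := by rw [hρdef]; field_simp
  -- choice of j
  obtain ⟨j, -, hj⟩ := Finset.exists_min_image Finset.univ (fun k => s k * t) ⟨0, Finset.mem_univ 0⟩
  have hjt : s j * t ≤ 0 := by
    have hsum : ∑ k, s k * t = 0 := by
      rw [← Finset.sum_mul, hsdef]
      simp only
      rw [sum_s]
      ring
    have hle : ∀ k ∈ Finset.univ, s j * t ≤ s k * t := fun k hk => hj k hk
    have := Finset.card_nsmul_le_sum Finset.univ (fun k => s k * t) (s j * t) (fun k hk => hj k hk)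
    rw [hsum] at this
    simp only [Finset.card_univ, Fintype.card_fin, nsmul_eq_mul] at this
    have hd1 : (0:ℝ) < (d+1 : ℕ) := by positivity
    nlinarith
  -- inner product computations
  have hPw : ∀ i : Fin m, ⟪bb d (fm i) - R • uu d, w⟫_ℝ = s (fm i) - R * t := by
    intro i
    simp only [inner_sub_left, real_inner_smul_left, hsdef, htdef]
  have hbjw : ⟪bb d j, w⟫_ℝ = s j := rfl
  have huw : ⟪uu d, w⟫_ℝ = t := rfl
  clear_value t s ρ
  have hRpos : (0:ℝ) < R := by rw [hRdef]; positivity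
  clear_value D R β
  by_cases hρB : ρ ≤ 1/2
  · -- Case B : w is nearly parallel to uu
    set v := proj w (bb d j) with hv
    have hvv : ⟪v, v⟫_ℝ = (1 - β) - s j * s j := by
      rw [hv, proj_inner _ _ _ hw, inner_bb, hbjw]
      norm_num [hβdef, hDdef]
    have hvne : v ≠ 0 := by
      intro h0
      rw [h0, inner_zero_left] at hvv
      have h1 : s j^2 * D ≤ 1/2 := le_trans (hs j) hρB
      have h2 : s j^2 ≤ 1/4 := by
        nlinarith [mul_nonneg (sq_nonneg (s j)) (sub_nonneg.2 hD2), h1]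
      have h3 : β ≤ 1/2 := by
        nlinarith [mul_nonneg hβpos.le (sub_nonneg.2 hD2), hβD]
      nlinarith [h2, h3, hvv]
    refine ⟨v, hvne, -β/4, ?_, ?_⟩
    · intro jq
      simp only [proj_zero, inner_zero_left]
      linarith [hβpos]
    · have key : ∀ i : Fin m, ¬ (fm i = j) →
          ⟪proj w (bb d (fm i) - R • uu d), v⟫_ℝ < -β/4 := by
        intro i hine
        rw [hv, proj_inner _ _ _ hw]
        have e1 : ⟪bb d (fm i) - R • uu d, bb d j⟫_ℝ = -β := by
          simp only [inner_sub_left, real_inner_smul_left, inner_bb, inner_ub, if_neg hine,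
            hβdef, ← hDdef]
          ring
        rw [e1, hPw i, hbjw]
        have hRts : R * (s j * t) ≤ 0 :=
          mul_nonpos_of_nonneg_of_nonpos hRpos.le hjt
        have hA1 : 0 ≤ (s (fm i) + s j)^2 * D := mul_nonneg (sq_nonneg _) hDpos.le
        have hA3 : (0:ℝ)*D ≤ (β + 2*(s (fm i) * s j))*D := by
          nlinarith [hβD, hρB, hA1, hs (fm i), hs j]
        have hA4 : 0 ≤ β + 2*(s (fm i) * s j) := le_of_mul_le_mul_right (by linarith) hDpos
        nlinarith [hA4, hβpos, hRts]
      refine le_trans (count_ge d m hm j) (Finset.card_le_card ?_)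
      intro i hi
      simp only [Finset.mem_filter, Finset.mem_univ, true_and] at hi ⊢
      exact key i (fun hfm => hi (by rw [← hfm]))
  · -- Case A : w is far from uu
    push_neg at hρB
    set v := proj w (R • uu d - bb d j) with hv
    have hyy : ⟪R • uu d - bb d j, R • uu d - bb d j⟫_ℝ = R^2*D + (1 - β) := by
      simp only [inner_sub_left, inner_sub_right, real_inner_smul_left, real_inner_smul_right,
        inner_uu, inner_bb, inner_ub, inner_bu, eq_self_iff_true, if_true, hβdef, ← hDdef]
      ring
    have hyw : ⟪R • uu d - bb d j, w⟫_ℝ = R * t - s j := by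
      simp only [inner_sub_left, real_inner_smul_left, huw, hbjw]
    have hvv : ⟪v, v⟫_ℝ = R^2*D + (1 - β) - (R*t - s j)^2 := by
      rw [hv, proj_inner _ _ _ hw, hyy, hyw]
      ring
    have hvne : v ≠ 0 := by
      intro h0
      rw [h0, inner_zero_left] at hvv
      have hD4 : (4:ℝ) ≤ D^2 := by nlinarith
      have hB1 : 0 ≤ (t + 5*s j)^2 * D := mul_nonneg (sq_nonneg _) hDpos.le
      have h3 : β ≤ 1/2 := by
        nlinarith [mul_nonneg hβpos.le (sub_nonneg.2 hD2), hβD]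
      have ht2D : t^2 * D ≤ D^2 := by nlinarith [ht, hDpos]
      have hsj2 : s j^2 ≤ ρ/2 := by
        nlinarith [hs j, mul_nonneg (sub_nonneg.2 hD2) (sq_nonneg (s j))]
      have hρmul : 25*D^2*ρ = 25*D^2*D - 25*D^2*t^2 := by rw [hρdef]; ring
      have hk2 : -(10*(D*(t*s j))) ≤ D^2 + 25*ρ := by nlinarith [hB1, ht2D, hs j]
      have hprod : ρ*D^2 ≥ D^2/2 + 4*ρ - 2 := by
        nlinarith [mul_nonneg (sub_nonneg.2 hρB.le) (sub_nonneg.2 hD4)]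
      rw [hRdef] at hvv
      linarith [hk2, hsj2, hρmul, hprod, h3, hρB, hD4, hvv]
    refine ⟨v, hvne, -1, ?_, ?_⟩
    · intro jq
      simp only [proj_zero, inner_zero_left]
      norm_num
    · have key : ∀ i : Fin m, ¬ (fm i = j) →
          ⟪proj w (bb d (fm i) - R • uu d), v⟫_ℝ < -1 := by
        intro i hine
        rw [hv, proj_inner _ _ _ hw]
        have e1 : ⟪bb d (fm i) - R • uu d, R • uu d - bb d j⟫_ℝ = β - R^2*D := by
          simp only [inner_sub_left, inner_sub_right, real_inner_smul_left,
            real_inner_smul_right, inner_uu, inner_bb, inner_ub, inner_bu, if_neg hine,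
            hβdef, ← hDdef]
          ring
        rw [e1, hPw i, hyw]
        have hD4 : (4:ℝ) ≤ D^2 := by nlinarith
        have h3 : β ≤ 1/2 := by
          nlinarith [mul_nonneg hβpos.le (sub_nonneg.2 hD2), hβD]
        have hC1 : 0 ≤ (t + 5*s (fm i))^2 * D := mul_nonneg (sq_nonneg _) hDpos.le
        have hC2 : 0 ≤ (t + 5*s j)^2 * D := mul_nonneg (sq_nonneg _) hDpos.le
        have hsk2 : s (fm i)^2 ≤ ρ/2 := by
          nlinarith [hs (fm i), mul_nonneg (sub_nonneg.2 hD2) (sq_nonneg (s (fm i)))]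
        have hsj2 : s j^2 ≤ ρ/2 := by
          nlinarith [hs j, mul_nonneg (sub_nonneg.2 hD2) (sq_nonneg (s j))]
        have hsksj : s (fm i) * s j ≤ ρ/2 := by
          nlinarith [sq_nonneg (s (fm i) - s j)]
        have ht2D : t^2 * D ≤ D^2 := by nlinarith [ht, hDpos]
        have hρmul : 25*D^2*ρ = 25*D^2*D - 25*D^2*t^2 := by rw [hρdef]; ring
        have hk1 : -(10*(D*(t*s (fm i)))) ≤ D^2 + 25*ρ := by nlinarith [hC1, ht2D, hs (fm i)]
        have hk2 : -(10*(D*(t*s j))) ≤ D^2 + 25*ρ := by nlinarith [hC2, ht2D, hs j]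
        have hprod : ρ*D^2 ≥ D^2/2 + 4*ρ - 2 := by
          nlinarith [mul_nonneg (sub_nonneg.2 hρB.le) (sub_nonneg.2 hD4)]
        rw [hRdef]
        linarith [hk1, hk2, hsksj, hρmul, hprod, h3, hρB, hD4]
      refine le_trans (count_ge d m hm j) (Finset.card_le_card ?_)
      intro i hi
      simp only [Finset.mem_filter, Finset.mem_univ, true_and] at hi ⊢
      exact key i (fun hfm => hi (by rw [← hfm]))
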